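/- Let D be a weakly connected digraph and let e be an edge of D that lies in infinitely many finite dibonds of D. Then there is an infinite dibond of D containing e. -/

import Mathlib

/-- A digraph with vertex type `V` and edge type `E`, allowing parallel edges. -/
structure MultiDigraph (V : Type*) (E : Type*) where
  tail : E → V
  head : E → V

namespace MultiDigraph

variable {V : Type*} {E : Type*} (D : MultiDigraph V E)

/-- Adjacency in the underlying undirected multigraph. -/
def Adj (u v : V) : Prop :=
  ∃ e : E, (D.tail e = u ∧ D.head e = v) ∨ (D.tail e = v ∧ D.head e = u)

/-- The underlying undirected multigraph is connected. -/
def WeaklyConnected : Prop :=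
  ∀ u v : V, Relation.ReflTransGen D.Adj u v

/-- `B` is the dicut of `D` whose in-shore is `X` (every edge of the cut has its
head in `X`, and no edge leaves `X`). -/
def DicutWith (X : Set V) (B : Set E) : Prop :=
  (∀ e : E, D.tail e ∈ X → D.head e ∈ X) ∧
    B = {e : E | D.tail e ∉ X ∧ D.head e ∈ X}

/-- `B` is a dicut of `D`. -/
def IsDicut (B : Set E) : Prop :=
  ∃ X : Set V, D.DicutWith X B

/-- A dibond is a minimal non-empty dicut. -/
def IsDibond (B : Set E) : Prop :=
  D.IsDicut B ∧ B.Nonempty ∧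
    ∀ B' : Set E, D.IsDicut B' → B'.Nonempty → B' ⊆ B → B' = B

/-- A dijoin meets every non-empty dicut. -/
def Dijoin (F : Set E) : Prop :=
  ∀ B : Set E, D.IsDicut B → B.Nonempty → (F ∩ B).Nonempty

/-- A finitary dijoin meets every non-empty finite dicut. -/
def FinitaryDijoin (F : Set E) : Prop :=
  ∀ B : Set E, D.IsDicut B → B.Finite → B.Nonempty → (F ∩ B).Nonempty

/-- Two dicuts are nested if they have witnessing sides one of which is
`⊆`-comparable with a side of the other. -/
def NestedDicuts (B₁ B₂ : Set E) : Prop :=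
  ∃ X₁ X₂ : Set V, D.DicutWith X₁ B₁ ∧ D.DicutWith X₂ B₂ ∧
    (X₁ ⊆ X₂ ∨ X₂ ⊆ X₁ ∨ X₁ ⊆ X₂ᶜ ∨ X₂ᶜ ⊆ X₁)

/-- An optimal pair: a set `ℬ` of pairwise disjoint finite dicuts and a finitary
dijoin `F ⊆ ⋃ ℬ` meeting each member of `ℬ` in exactly one edge. -/
def OptimalPair (F : Set E) (ℬ : Set (Set E)) : Prop :=
  (∀ B ∈ ℬ, D.IsDicut B ∧ B.Finite) ∧
    ℬ.Pairwise Disjoint ∧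
    D.FinitaryDijoin F ∧
    F ⊆ ⋃₀ ℬ ∧
    ∀ B ∈ ℬ, (F ∩ B).ncard = 1

/-- A nested optimal pair. -/
def NestedOptimalPair (F : Set E) (ℬ : Set (Set E)) : Prop :=
  D.OptimalPair F ℬ ∧ ℬ.Pairwise D.NestedDicuts

/-- The underlying multigraph contains no ray. -/
def Rayless : Prop :=
  ¬ ∃ f : ℕ → V, Function.Injective f ∧ ∀ n : ℕ, D.Adj (f n) (f (n + 1))

/-- The (undirected) cut of `D` with side `X`: all edges with exactly one
endpoint in `X`. -/
def cutEdges (X : Set V) : Set E :=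
  {e : E | (D.tail e ∈ X ∧ D.head e ∉ X) ∨ (D.tail e ∉ X ∧ D.head e ∈ X)}

/-- Any two distinct vertices are separated by a finite cut. -/
def FinitelySeparable : Prop :=
  ∀ v w : V, v ≠ w → ∃ X : Set V, (D.cutEdges X).Finite ∧ v ∈ X ∧ w ∉ X

/-- Any two distinct vertices lie on different sides of some finite dicut. -/
def FinitelyDiseparable : Prop :=
  ∀ v w : V, v ≠ w → ∃ (X : Set V) (B : Set E), D.DicutWith X B ∧ B.Finite ∧
    ((v ∈ X ∧ w ∉ X) ∨ (v ∉ X ∧ w ∈ X))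

/-- The underlying multigraph is 2-connected: it is connected and deleting any
single vertex keeps it connected. -/
def UnderlyingTwoConnected : Prop :=
  D.WeaklyConnected ∧ ∀ x u v : V, u ≠ x → v ≠ x →
    Relation.ReflTransGen (fun a b => a ≠ x ∧ b ≠ x ∧ D.Adj a b) u v

/-- `v ∼ w`: no finite dicut of `D` separates `v` and `w`. -/
def Sim (v w : V) : Prop :=
  ∀ (X : Set V) (B : Set E), D.DicutWith X B → B.Finite → (v ∈ X ↔ w ∈ X)

/-- `W` is a witness for `v ∼ w`: it meets every finite cut separating `v`
and `w` in both directions. -/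
def Witness (v w : V) (W : Set E) : Prop :=
  ∀ X : Set V, (D.cutEdges X).Finite → v ∈ X → w ∉ X →
    (∃ e ∈ W, D.tail e ∈ X ∧ D.head e ∉ X) ∧
    (∃ e ∈ W, D.tail e ∉ X ∧ D.head e ∈ X)

end MultiDigraph

/-- If an edge `e` of a weakly connected digraph lies in infinitely many finite
dibonds, then `e` lies in an infinite dibond. -/
private lemma rtg_mono_aux {α : Type*} {r s : α → α → Prop} {x y : α}
    (h : Relation.ReflTransGen r x y)
    (H : ∀ a b, Relation.ReflTransGen r x a → r a b → s a b) :
    Relation.ReflTransGen s x y := by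
  induction h with
  | refl => exact .refl
  | tail hxa hab ih => exact ih.tail (H _ _ hxa hab)

private lemma adj_symm_aux {V E : Type*} (D : MultiDigraph V E) {a b : V}
    (h : D.Adj a b) : D.Adj b a := by
  obtain ⟨f, hf⟩ := h
  exact ⟨f, hf.symm⟩

private lemma extract_dibond_aux {V E : Type*} (D : MultiDigraph V E)
    (hD : D.WeaklyConnected) (e : E) (Xinf : Set V)
    (hcl : ∀ f, D.tail f ∈ Xinf → D.head f ∈ Xinf)
    (hh : D.head e ∈ Xinf) (ht : D.tail e ∉ Xinf) :
    ∃ B₂ : Set E, D.IsDibond B₂ ∧ e ∈ B₂ ∧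
      ∀ f ∈ B₂, D.head f ∈ Xinf ∧ D.tail f ∉ Xinf := by
  classical
  set R₁ : V → V → Prop := fun a b => a ∉ Xinf ∧ b ∉ Xinf ∧ D.Adj a b with hR₁
  set Y : V → Prop := fun v => Relation.ReflTransGen R₁ (D.tail e) v with hY
  have hYt : Y (D.tail e) := Relation.ReflTransGen.refl
  have hYnotin : ∀ v, Y v → v ∉ Xinf := by
    intro v hv
    rcases Relation.ReflTransGen.cases_tail hv with h1 | ⟨c, _, hc⟩
    · exact h1 ▸ ht
    · exact hc.2.1
  set R₂ : V → V → Prop := fun a b => ¬ Y a ∧ ¬ Y b ∧ D.Adj a b with hR₂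
  set X₂ : V → Prop := fun v => Relation.ReflTransGen R₂ (D.head e) v with hX₂
  have hhX₂ : X₂ (D.head e) := Relation.ReflTransGen.refl
  have hX₂notY : ∀ v, X₂ v → ¬ Y v := by
    intro v hv
    rcases Relation.ReflTransGen.cases_tail hv with h1 | ⟨c, _, hc⟩
    · exact h1 ▸ (fun hy => hYnotin _ hy hh)
    · exact hc.2.1
  have hX₁closed : ∀ f : E, ¬ Y (D.tail f) → ¬ Y (D.head f) := by
    intro f htl hhd
    by_cases hX : D.tail f ∈ Xinf
    · exact (hYnotin _ hhd) (hcl f hX)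
    · exact htl (hhd.tail ⟨hYnotin _ hhd, hX, adj_symm_aux D ⟨f, Or.inl ⟨rfl, rfl⟩⟩⟩)
  have hX₂closed : ∀ f : E, X₂ (D.tail f) → X₂ (D.head f) := by
    intro f hf
    exact hf.tail ⟨hX₂notY _ hf, hX₁closed f (hX₂notY _ hf), ⟨f, Or.inl ⟨rfl, rfl⟩⟩⟩
  have htnX₂ : ¬ X₂ (D.tail e) := fun hx => hX₂notY _ hx hYt
  set B₂ : Set E := {f : E | D.tail f ∉ {v : V | X₂ v} ∧ D.head f ∈ {v : V | X₂ v}} with hB₂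
  have heB₂ : e ∈ B₂ := ⟨htnX₂, hhX₂⟩
  have hprop : ∀ f ∈ B₂, D.head f ∈ Xinf ∧ D.tail f ∉ Xinf := by
    intro f hf
    obtain ⟨hft, hfh⟩ := hf
    have htlY : Y (D.tail f) := by
      by_contra hnot
      exact hft ((hfh : X₂ (D.head f)).tail
        ⟨hX₂notY _ hfh, hnot, adj_symm_aux D ⟨f, Or.inl ⟨rfl, rfl⟩⟩⟩)
    have htlX : D.tail f ∉ Xinf := hYnotin _ htlY
    have hhdX : D.head f ∈ Xinf := by
      by_contra hnot
      exact hX₂notY _ hfh (htlY.tail ⟨htlX, hnot, ⟨f, Or.inl ⟨rfl, rfl⟩⟩⟩)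
    exact ⟨hhdX, htlX⟩
  -- connectivity of the complement of X₂
  set R : V → V → Prop := fun a b => ¬ X₂ a ∧ ¬ X₂ b ∧ D.Adj a b with hR
  have hRsymm : Symmetric R := fun a b ⟨h1, h2, h3⟩ => ⟨h2, h1, adj_symm_aux D h3⟩
  have hR₂symm : Symmetric R₂ := fun a b ⟨h1, h2, h3⟩ => ⟨h2, h1, adj_symm_aux D h3⟩
  have hYtoR : ∀ v, Y v → Relation.ReflTransGen R (D.tail e) v := by
    intro v hv
    refine rtg_mono_aux hv ?_
    intro a b hta hab
    exact ⟨fun hx => hX₂notY a hx hta, fun hx => hX₂notY b hx (hta.tail hab), hab.2.2⟩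
  have hcompl_conn : ∀ v, ¬ X₂ v → Relation.ReflTransGen R v (D.tail e) := by
    intro v hv
    by_cases hvY : Y v
    · exact (@Relation.ReflTransGen.stdSymm _ R ⟨fun _ _ h => hRsymm h⟩).symm _ _ (hYtoR v hvY)
    · have hR₂notY : ∀ u, Relation.ReflTransGen R₂ v u → ¬ Y u := by
        intro u hu
        rcases Relation.ReflTransGen.cases_tail hu with h1 | ⟨c, _, hc⟩
        · exact h1 ▸ hvY
        · exact hc.2.1
      have hR₂notX₂ : ∀ u, Relation.ReflTransGen R₂ v u → ¬ X₂ u := by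
        intro u hu hX₂u
        exact hv ((hX₂u : Relation.ReflTransGen R₂ (D.head e) u).trans
          ((@Relation.ReflTransGen.stdSymm _ R₂ ⟨fun _ _ h => hR₂symm h⟩).symm _ _ hu))
      have hR₂toR : ∀ u, Relation.ReflTransGen R₂ v u → Relation.ReflTransGen R v u := by
        intro u hu
        refine rtg_mono_aux hu ?_
        intro a b hva hab
        exact ⟨hR₂notX₂ a hva, hR₂notX₂ b (hva.tail hab), hab.2.2⟩
      have key : ∀ u, Relation.ReflTransGen D.Adj u (D.tail e) →
          (Relation.ReflTransGen R₂ v u → Relation.ReflTransGen R v (D.tail e)) := by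
        intro u hu
        induction hu using Relation.ReflTransGen.head_induction_on with
        | refl =>
          intro hvt
          exact absurd hYt (hR₂notY _ hvt)
        | head h' hrest ih =>
          rename_i a c
          intro hva
          by_cases hcY : Y c
          · have hvaR := hR₂toR a hva
            have hstep : R a c := ⟨hR₂notX₂ a hva, fun hx => hX₂notY c hx hcY, h'⟩
            exact (hvaR.tail hstep).trans
              ((@Relation.ReflTransGen.stdSymm _ R ⟨fun _ _ h => hRsymm h⟩).symm _ _ (hYtoR c hcY))
          · exact ih (hva.tail ⟨hR₂notY a hva, hcY, h'⟩)
      exact key v (hD v (D.tail e)) Relation.ReflTransGen.refl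
  -- minimality
  have hmin : ∀ B' : Set E, D.IsDicut B' → B'.Nonempty → B' ⊆ B₂ → B' = B₂ := by
    rintro B' ⟨X₀, hX₀cl, hX₀eq⟩ ⟨f₀, hf₀⟩ hsub
    have hsame : ∀ a b, D.Adj a b → (X₂ a ↔ X₂ b) → (a ∈ X₀ ↔ b ∈ X₀) := by
      rintro a b ⟨g, ⟨rfl, rfl⟩ | ⟨rfl, rfl⟩⟩ hiff
      · constructor
        · exact hX₀cl g
        · intro hb
          by_contra ha
          have hgB' : g ∈ B' := by rw [hX₀eq]; exact ⟨ha, hb⟩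
          have hgB₂ := hsub hgB'
          exact hgB₂.1 (hiff.mpr hgB₂.2)
      · constructor
        · intro ha
          by_contra hb
          have hgB' : g ∈ B' := by rw [hX₀eq]; exact ⟨hb, ha⟩
          have hgB₂ := hsub hgB'
          exact hgB₂.1 (hiff.mp hgB₂.2)
        · exact hX₀cl g
    have hX₂side : ∀ p, X₂ p → (p ∈ X₀ ↔ D.head e ∈ X₀) := by
      intro p hp
      induction (hp : Relation.ReflTransGen R₂ (D.head e) p) with
      | refl => exact Iff.rfl
      | tail hxa hab ih =>
        exact ((hsame _ _ hab.2.2 (iff_of_true hxa (hxa.tail hab))).symm).trans ih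
    have hcside : ∀ p, ¬ X₂ p → (p ∈ X₀ ↔ D.tail e ∈ X₀) := by
      intro p hp
      have hpath := hcompl_conn p hp
      clear hp
      induction hpath using Relation.ReflTransGen.head_induction_on with
      | refl => exact Iff.rfl
      | head h' hrest ih =>
        exact (hsame _ _ h'.2.2 (iff_of_false h'.1 h'.2.1)).trans ih
    have hf₀' : D.tail f₀ ∉ X₀ ∧ D.head f₀ ∈ X₀ := by rw [hX₀eq] at hf₀; exact hf₀
    have hf₀₂ := hsub hf₀
    have hhd₀ : D.head e ∈ X₀ := (hX₂side _ hf₀₂.2).mp hf₀'.2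
    have ht₀ : D.tail e ∉ X₀ := fun hc => hf₀'.1 ((hcside _ hf₀₂.1).mpr hc)
    have hXeq : X₀ = {v : V | X₂ v} := by
      ext v
      constructor
      · intro hv
        by_contra hvX₂
        exact ht₀ ((hcside v hvX₂).mp hv)
      · intro hv
        exact (hX₂side v hv).mpr hhd₀
    rw [hX₀eq, hXeq]
  exact ⟨B₂, ⟨⟨{v : V | X₂ v}, hX₂closed, rfl⟩, ⟨e, heB₂⟩, hmin⟩, heB₂, hprop⟩
theorem infinite_dibond_of_infinitely_many_finite_dibonds {V E : Type*}
    (D : MultiDigraph V E) (hD : D.WeaklyConnected) (e : E)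
    (h : {B : Set E | D.IsDibond B ∧ B.Finite ∧ e ∈ B}.Infinite) :
    ∃ B : Set E, D.IsDibond B ∧ B.Infinite ∧ e ∈ B := by
  classical
  set T : Set (Set E) := {B : Set E | D.IsDibond B ∧ B.Finite ∧ e ∈ B} with hTdef
  haveI : Infinite ↥T := h.to_subtype
  have hXc : ∀ B : ↥T, ∃ X : Set V, D.DicutWith X (B : Set E) := fun B => B.2.1.1
  choose X hX using hXc
  set 𝒰 : Ultrafilter ↥T := Filter.hyperfilter ↥T with h𝒰
  set Xinf : Set V := {v : V | {B : ↥T | v ∈ X B} ∈ 𝒰} with hXinf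
  have hmemX : ∀ B : ↥T, e ∈ (B : Set E) := fun B => B.2.2.2
  have heX : ∀ B : ↥T, D.tail e ∉ X B ∧ D.head e ∈ X B := by
    intro B
    have h2 := (hX B).2
    have h3 := hmemX B
    rw [h2] at h3
    exact h3
  have hcl : ∀ f, D.tail f ∈ Xinf → D.head f ∈ Xinf := by
    intro f hf
    exact Filter.mem_of_superset hf (fun B hB => (hX B).1 f hB)
  have hh : D.head e ∈ Xinf :=
    Filter.mem_of_superset Filter.univ_mem (fun B _ => (heX B).2)
  have ht : D.tail e ∉ Xinf := by
    intro hmem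
    obtain ⟨B, hB⟩ := Filter.nonempty_of_mem (hmem : _ ∈ (𝒰 : Filter ↥T))
    exact (heX B).1 hB
  obtain ⟨B₂, hdib, heB₂, hprop⟩ := extract_dibond_aux D hD e Xinf hcl hh ht
  refine ⟨B₂, hdib, ?_, heB₂⟩
  intro hfin
  have hkey : ∀ f ∈ B₂, {B : ↥T | f ∈ (B : Set E)} ∈ 𝒰 := by
    intro f hf
    obtain ⟨hhd, htl⟩ := hprop f hf
    have h1 : {B : ↥T | D.head f ∈ X B} ∈ 𝒰 := hhd
    have h2 : {B : ↥T | D.tail f ∈ X B}ᶜ ∈ 𝒰 :=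
      (Ultrafilter.compl_mem_iff_notMem).mpr htl
    refine Filter.mem_of_superset (Filter.inter_mem h2 h1) ?_
    rintro B ⟨hB1, hB2⟩
    have := (hX B).2
    rw [Set.mem_setOf_eq, this]
    exact ⟨hB1, hB2⟩
  have hT' : {B : ↥T | ∀ f ∈ B₂, f ∈ (B : Set E)} ∈ 𝒰 := by
    have h3 := (Filter.biInter_mem hfin).mpr hkey
    refine Filter.mem_of_superset h3 ?_
    intro B hB
    simp only [Set.mem_iInter] at hB
    exact hB
  have hTinf : {B : ↥T | ∀ f ∈ B₂, f ∈ (B : Set E)}.Infinite := by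
    by_contra hfin2
    rw [Set.not_infinite] at hfin2
    exact Filter.notMem_hyperfilter_of_finite hfin2 hT'
  obtain ⟨B, hB, B', hB', hne⟩ := hTinf.nontrivial
  have h1 : B₂ = (B : Set E) :=
    B.2.1.2.2 B₂ hdib.1 ⟨e, heB₂⟩ (fun f hf => hB f hf)
  have h2 : B₂ = (B' : Set E) :=
    B'.2.1.2.2 B₂ hdib.1 ⟨e, heB₂⟩ (fun f hf => hB' f hf)
  exact hne (Subtype.ext (h1.symm.trans h2))
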